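/- Finite induction identity (Lemma A.1). Let m ≥ 3, let i, j ∈ {2,…,m} with i ≤ j−1, and let θ_2,…,θ_m ∈ ℝ with cos θ_i ≠ 0. Then for every q ∈ {1,…,i−1}: Σ_{k=2}^{i−1} sin²θ_k · (φ_{k+1,m}/cos θ_i) · φ_{k+1,j−1} − cos θ_i · φ_{i+1,m} · φ_{i+1,j−1} = Σ_{k=2}^{q} sin²θ_k · (φ_{k+1,m}/cos θ_i) · φ_{k+1,j−1} − (φ_{q+1,m} · φ_{q+1,j−1}) / cos θ_i, where the sum on the right-hand side is empty (equal to zero) when q = 1. -/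

import Mathlib

open Real

/-- `φ_{k,l} = ∏_{n=k}^l cos θ_n` when `k ≤ l`, and `φ_{k,l} = 1` when `k ≥ l+1`
(the product over the empty range). -/
noncomputable def phiProd (θ : ℕ → ℝ) (k l : ℕ) : ℝ :=
  ∏ n ∈ Finset.Icc k l, Real.cos (θ n)

lemma phiProd_step (θ : ℕ → ℝ) (k l : ℕ) (h : k ≤ l) :
    phiProd θ k l = Real.cos (θ k) * phiProd θ (k + 1) l := by
  unfold phiProd
  have hins : Finset.Icc k l = insert k (Finset.Icc (k + 1) l) := by
    ext x; simp; omega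
  rw [hins, Finset.prod_insert (by simp)]

/-- **Finite induction identity** (Lemma A.1). -/
theorem finite_induction_A1 (m : ℕ) (hm : 3 ≤ m) (θ : ℕ → ℝ) (i j : ℕ)
    (hi2 : 2 ≤ i) (him : i ≤ m) (hj2 : 2 ≤ j) (hjm : j ≤ m) (hij : i ≤ j - 1)
    (hcos : Real.cos (θ i) ≠ 0) (q : ℕ) (hq1 : 1 ≤ q) (hqi : q ≤ i - 1) :
    (∑ k ∈ Finset.Icc 2 (i - 1),
        Real.sin (θ k) ^ 2 * (phiProd θ (k + 1) m / Real.cos (θ i)) * phiProd θ (k + 1) (j - 1))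
      - Real.cos (θ i) * phiProd θ (i + 1) m * phiProd θ (i + 1) (j - 1)
    = (∑ k ∈ Finset.Icc 2 q,
        Real.sin (θ k) ^ 2 * (phiProd θ (k + 1) m / Real.cos (θ i)) * phiProd θ (k + 1) (j - 1))
      - phiProd θ (q + 1) m * phiProd θ (q + 1) (j - 1) / Real.cos (θ i) := by
  have key : ∀ d q', 1 ≤ q' → q' + d = i - 1 →
      (∑ k ∈ Finset.Icc 2 (i - 1),
          Real.sin (θ k) ^ 2 * (phiProd θ (k + 1) m / Real.cos (θ i)) * phiProd θ (k + 1) (j - 1))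
        - Real.cos (θ i) * phiProd θ (i + 1) m * phiProd θ (i + 1) (j - 1)
      = (∑ k ∈ Finset.Icc 2 q',
          Real.sin (θ k) ^ 2 * (phiProd θ (k + 1) m / Real.cos (θ i)) * phiProd θ (k + 1) (j - 1))
        - phiProd θ (q' + 1) m * phiProd θ (q' + 1) (j - 1) / Real.cos (θ i) := by
    intro d
    induction d with
    | zero =>
      intro q' hq1' hq'
      have hq'i : q' + 1 = i := by omega
      have h1 : phiProd θ (q' + 1) m = Real.cos (θ i) * phiProd θ (i + 1) m := by
        rw [hq'i]; exact phiProd_step θ i m him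
      have h2 : phiProd θ (q' + 1) (j - 1) = Real.cos (θ i) * phiProd θ (i + 1) (j - 1) := by
        rw [hq'i]; exact phiProd_step θ i (j - 1) hij
      rw [h1, h2]
      have : q' = i - 1 := by omega
      rw [this]
      field_simp
    | succ n ih =>
      intro q' hq1' hq'
      have hstep := ih (q' + 1) (by omega) (by omega)
      rw [hstep]
      have h2q : 2 ≤ q' + 1 := by omega
      rw [Finset.sum_Icc_succ_top h2q]
      have hle1 : q' + 1 ≤ m := by omega
      have hle2 : q' + 1 ≤ j - 1 := by omega
      have h1 : phiProd θ (q' + 1) m = Real.cos (θ (q' + 1)) * phiProd θ (q' + 1 + 1) m :=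
        phiProd_step θ (q' + 1) m hle1
      have h2 : phiProd θ (q' + 1) (j - 1)
          = Real.cos (θ (q' + 1)) * phiProd θ (q' + 1 + 1) (j - 1) :=
        phiProd_step θ (q' + 1) (j - 1) hle2
      have hsin : Real.sin (θ (q' + 1)) ^ 2 = 1 - Real.cos (θ (q' + 1)) ^ 2 := by
        rw [Real.sin_sq]
      rw [h1, h2, hsin]
      field_simp
      ring
  exact key (i - 1 - q) q hq1 (by omega)
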